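/- (Derivative formula for the confluent hypergeometric function of the second kind) For every a > 0, c ∈ ℝ and z > 0, the map z ↦ U(a, c, z) is differentiable at z and ∂U/∂z (a, c, z) = −a·U(a+1, c+1, z). -/

import Mathlib

open MeasureTheory

/-- The confluent hypergeometric function of the second kind, defined for `a > 0`, `z > 0`
by its integral representation `U(a,c,z) = (1/Γ(a))·∫₀^∞ e^{−zt} t^{a−1} (1+t)^{c−a−1} dt`. -/
noncomputable def hypergeometricU (a c z : ℝ) : ℝ :=
  (1 / Real.Gamma a) *
    ∫ t in Set.Ioi (0:ℝ), Real.exp (-z * t) * t ^ (a - 1) * (1 + t) ^ (c - a - 1)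

/-- Derivative formula for the confluent hypergeometric function of the second kind:
for `a > 0` and `z > 0`, `∂U/∂z(a,c,z) = −a·U(a+1,c+1,z)`. -/
lemma aux_pointwise (r : ℝ) {t : ℝ} (ht : 0 < t) :
    (1 + t) ^ r ≤ (2:ℝ) ^ |r| * (1 + t ^ max r 0) := by
  set r' := max r 0 with hr'
  have h1t : (1:ℝ) ≤ 1 + t := by linarith
  have h0 : (0:ℝ) ≤ r' := le_max_right _ _
  have step1 : (1 + t) ^ r ≤ (1 + t) ^ r' :=
    Real.rpow_le_rpow_of_exponent_le h1t (le_max_left _ _)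
  have step2 : (1 + t) ^ r' ≤ (2 * max 1 t) ^ r' := by
    apply Real.rpow_le_rpow (by linarith) _ h0
    rcases le_total t 1 with h | h
    · simp [max_eq_left h]; linarith
    · rw [max_eq_right h]; linarith
  have step3 : (2 * max 1 t) ^ r' = 2 ^ r' * (max 1 t) ^ r' := by
    rw [Real.mul_rpow (by norm_num) (by positivity)]
  have step4 : (max 1 t) ^ r' ≤ 1 + t ^ r' := by
    rcases le_total t 1 with h | h
    · rw [max_eq_left h, Real.one_rpow]
      have : (0:ℝ) ≤ t ^ r' := by positivity
      linarith
    · rw [max_eq_right h]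
      have : (0:ℝ) ≤ (1:ℝ) := by norm_num
      linarith [Real.rpow_nonneg (le_of_lt ht) r', le_refl (t ^ r')]
  have step5 : (2:ℝ) ^ r' ≤ 2 ^ |r| := by
    apply Real.rpow_le_rpow_of_exponent_le one_le_two
    exact max_le (le_abs_self r) (abs_nonneg r)
  calc (1 + t) ^ r ≤ (1 + t) ^ r' := step1
    _ ≤ 2 ^ r' * (max 1 t) ^ r' := by rw [← step3]; exact step2
    _ ≤ 2 ^ |r| * (1 + t ^ r') := by
        apply mul_le_mul step5 step4 (by positivity) (by positivity)

lemma aux_integrable (b r s : ℝ) (hb : 0 < b) (hs : 0 < s) :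
    IntegrableOn (fun t : ℝ => Real.exp (-s * t) * t ^ (b - 1) * (1 + t) ^ r)
      (Set.Ioi (0:ℝ)) := by
  have hmeas : AEStronglyMeasurable
      (fun t : ℝ => Real.exp (-s * t) * t ^ (b - 1) * (1 + t) ^ r)
      (volume.restrict (Set.Ioi (0:ℝ))) := by
    apply Measurable.aestronglyMeasurable
    fun_prop
  have hint : IntegrableOn
      (fun t : ℝ => (2:ℝ) ^ |r| * (t ^ (b - 1) * Real.exp (-s * t)
        + t ^ (b - 1 + max r 0) * Real.exp (-s * t))) (Set.Ioi (0:ℝ)) := by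
    apply Integrable.const_mul
    apply Integrable.add
    · have h := integrableOn_rpow_mul_exp_neg_mul_rpow (s := b - 1) (p := 1) (b := s)
        (by linarith) zero_lt_one hs
      simpa [Real.rpow_one] using h.integrable
    · have h := integrableOn_rpow_mul_exp_neg_mul_rpow (s := b - 1 + max r 0) (p := 1) (b := s)
        (by have := le_max_right r 0; linarith) zero_lt_one hs
      simpa [Real.rpow_one] using h.integrable
  apply hint.integrable.mono' hmeas
  filter_upwards [ae_restrict_mem measurableSet_Ioi] with t ht
  rw [Set.mem_Ioi] at ht
  have he : (0:ℝ) < Real.exp (-s * t) := Real.exp_pos _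
  have htb : (0:ℝ) ≤ t ^ (b - 1) := by positivity
  have h1t : (0:ℝ) < 1 + t := by linarith
  rw [Real.norm_eq_abs, abs_of_nonneg (by positivity)]
  have key := aux_pointwise r ht
  have : Real.exp (-s * t) * t ^ (b - 1) * (1 + t) ^ r
      ≤ Real.exp (-s * t) * t ^ (b - 1) * ((2:ℝ) ^ |r| * (1 + t ^ max r 0)) := by
    apply mul_le_mul_of_nonneg_left key (by positivity)
  refine this.trans (le_of_eq ?_)
  rw [Real.rpow_add ht]
  ring

theorem hypergeometricU_hasDerivAt
    (a c z : ℝ) (ha : 0 < a) (hz : 0 < z) :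
    HasDerivAt (fun w : ℝ => hypergeometricU a c w)
      (-a * hypergeometricU (a + 1) (c + 1) z) z := by
  set r : ℝ := c - a - 1 with hr
  set F : ℝ → ℝ → ℝ := fun w t => Real.exp (-w * t) * t ^ (a - 1) * (1 + t) ^ r with hF
  set F' : ℝ → ℝ → ℝ := fun w t => -t * (Real.exp (-w * t) * t ^ (a - 1) * (1 + t) ^ r) with hF'
  have hmeasF : ∀ w : ℝ, AEStronglyMeasurable (F w) (volume.restrict (Set.Ioi (0:ℝ))) := by
    intro w
    apply Measurable.aestronglyMeasurable
    fun_prop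
  have hmeasF' : AEStronglyMeasurable (F' z) (volume.restrict (Set.Ioi (0:ℝ))) := by
    apply Measurable.aestronglyMeasurable
    fun_prop
  have hεpos : (0:ℝ) < z / 2 := by linarith
  have hbound_int : IntegrableOn
      (fun t : ℝ => Real.exp (-(z/2) * t) * t ^ ((a + 1) - 1) * (1 + t) ^ r) (Set.Ioi (0:ℝ)) :=
    aux_integrable (a + 1) r (z/2) (by linarith) hεpos
  have hFz_int : IntegrableOn (F z) (Set.Ioi (0:ℝ)) := aux_integrable a r z ha hz
  have key := hasDerivAt_integral_of_dominated_loc_of_deriv_le (F := F) (F' := F')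
      (x₀ := z) (s := Metric.ball z (z / 2)) (μ := volume.restrict (Set.Ioi (0:ℝ)))
      (bound := fun t => Real.exp (-(z/2) * t) * t ^ ((a + 1) - 1) * (1 + t) ^ r)
      (Metric.ball_mem_nhds z hεpos) (Filter.Eventually.of_forall hmeasF) hFz_int hmeasF'
      ?_ hbound_int ?_
  · obtain ⟨hint, hderiv⟩ := key
    have heq : (∫ t in Set.Ioi (0:ℝ), F' z t)
        = ∫ t in Set.Ioi (0:ℝ), -(Real.exp (-z * t) * t ^ ((a+1) - 1) * (1 + t) ^ ((c+1) - (a+1) - 1)) := by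
      apply setIntegral_congr_fun measurableSet_Ioi
      intro t ht
      rw [Set.mem_Ioi] at ht
      have : t ^ ((a+1) - 1) = t * t ^ (a - 1) := by
        rw [show (a+1) - 1 = 1 + (a - 1) by ring, Real.rpow_add ht, Real.rpow_one]
      simp only [hF', this, hr]
      ring_nf
    rw [heq] at hderiv
    have hG : Real.Gamma (a + 1) = a * Real.Gamma a := Real.Gamma_add_one (ne_of_gt ha)
    have hGa : Real.Gamma a ≠ 0 := Real.Gamma_ne_zero (by intro m; nlinarith [Nat.cast_nonneg (α := ℝ) m])
    have : HasDerivAt (fun w : ℝ => hypergeometricU a c w)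
        ((1 / Real.Gamma a) * ∫ t in Set.Ioi (0:ℝ),
          -(Real.exp (-z * t) * t ^ ((a+1) - 1) * (1 + t) ^ ((c+1) - (a+1) - 1))) z := by
      unfold hypergeometricU
      exact hderiv.const_mul _
    convert this using 1
    rw [integral_neg]
    unfold hypergeometricU
    rw [hG]
    field_simp
  · filter_upwards [ae_restrict_mem measurableSet_Ioi] with t ht
    rw [Set.mem_Ioi] at ht
    intro w hw
    rw [Metric.mem_ball, Real.dist_eq, abs_lt] at hw
    have hw2 : z / 2 < w := by linarith
    have hle : Real.exp (-w * t) ≤ Real.exp (-(z/2) * t) := by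
      apply Real.exp_le_exp.mpr
      nlinarith
    have hX : 0 ≤ Real.exp (-w * t) * t ^ (a - 1) * (1 + t) ^ r := by
      have h1t : (0:ℝ) ≤ 1 + t := by linarith
      positivity
    have h1tr : (0:ℝ) ≤ (1 + t) ^ r := Real.rpow_nonneg (by linarith) r
    simp only [hF', Real.norm_eq_abs]
    rw [abs_mul, abs_neg, abs_of_pos ht, abs_of_nonneg hX]
    have htt : t * t ^ (a - 1) = t ^ ((a+1) - 1) := by
      rw [show (a+1) - 1 = 1 + (a - 1) by ring, Real.rpow_add ht, Real.rpow_one]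
    calc t * (Real.exp (-w * t) * t ^ (a - 1) * (1 + t) ^ r)
        = Real.exp (-w * t) * t ^ ((a+1)-1) * (1 + t) ^ r := by rw [← htt]; ring
      _ ≤ Real.exp (-(z/2) * t) * t ^ ((a+1)-1) * (1 + t) ^ r := by
          apply mul_le_mul_of_nonneg_right _ h1tr
          exact mul_le_mul_of_nonneg_right hle (Real.rpow_nonneg ht.le _)
  · filter_upwards [ae_restrict_mem measurableSet_Ioi] with t ht
    rw [Set.mem_Ioi] at ht
    intro w hw
    have h1 : HasDerivAt (fun w : ℝ => -w * t) (-t) w := by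
      simpa using (hasDerivAt_id w).neg.mul_const t
    have h2 : HasDerivAt (fun w : ℝ => Real.exp (-w * t)) (Real.exp (-w * t) * (-t)) w :=
      (Real.hasDerivAt_exp _).comp w h1
    have h3 := (h2.mul_const (t ^ (a - 1))).mul_const ((1 + t) ^ r)
    convert h3 using 1
    · rfl
    simp only [hF']
    ring
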